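/- The set Z_{2,W} = {(x_1, x_2) ∈ T² : liminf_{N→∞} |∑_{n=1}^{N} exp(2πi(x_1 n + x_2 n²))| = 0} contains a dense G_δ subset of T². -/

import Mathlib

open Complex Filter

/-- The quadratic Weyl sum `S_2((x₁,x₂); N) = ∑_{n=1}^N e(x₁ n + x₂ n²)`. -/
noncomputable def quadWeylSum (x : ℝ × ℝ) (N : ℕ) : ℂ :=
  ∑ n ∈ Finset.Icc 1 N,
    Complex.exp (2 * Real.pi * Complex.I * ((x.1 : ℂ) * (n : ℂ) + (x.2 : ℂ) * (n : ℂ) ^ 2))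

/-- `e(θ) = exp(2πiθ)`. -/
noncomputable def ec (θ : ℝ) : ℂ := Complex.exp (2 * Real.pi * Complex.I * θ)

lemma quadWeylSum_eq (x : ℝ × ℝ) (N : ℕ) :
    quadWeylSum x N = ∑ n ∈ Finset.Icc 1 N, ec (x.1 * n + x.2 * (n : ℝ) ^ 2) := by
  unfold quadWeylSum ec
  refine Finset.sum_congr rfl fun n _ => ?_
  push_cast
  ring_nf

lemma ec_add (a b : ℝ) : ec (a + b) = ec a * ec b := by
  unfold ec
  rw [← Complex.exp_add]
  push_cast
  ring_nf

lemma ec_int (k : ℤ) : ec k = 1 := by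
  unfold ec
  rw [show (2 * Real.pi * Complex.I * (k : ℝ) : ℂ) = (k : ℤ) * (2 * Real.pi * Complex.I) by
    push_cast; ring]
  exact Complex.exp_int_mul_two_pi_mul_I k

lemma ec_nat_mul (j : ℕ) (θ : ℝ) : ec (j * θ) = ec θ ^ j := by
  unfold ec
  rw [show (2 * Real.pi * Complex.I * ((j : ℝ) * θ : ℝ) : ℂ)
      = (j : ℕ) * (2 * Real.pi * Complex.I * θ) by push_cast; ring]
  exact Complex.exp_nat_mul _ j

lemma ec_half_odd {b : ℤ} (hb : Odd b) : ec ((b : ℝ) / 2) = -1 := by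
  unfold ec
  rw [show (2 * Real.pi * Complex.I * ((b : ℝ) / 2 : ℝ) : ℂ)
      = (b : ℤ) * ((Real.pi : ℂ) * Complex.I) by push_cast; ring,
    Complex.exp_int_mul, Complex.exp_pi_mul_I]
  exact Odd.neg_one_zpow hb

/-- The shift identity for terms of the Weyl sum at rational points. -/
lemma term_shift (q : ℕ) (hq : 0 < q) (a b : ℤ) (hb : Odd b) (r j : ℕ) :
    ec (((b : ℝ) / (2 * q)) * ((r + j * q : ℕ) : ℝ)
        + ((a : ℝ) / q) * ((r + j * q : ℕ) : ℝ) ^ 2)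
      = (-1) ^ j * ec (((b : ℝ) / (2 * q)) * r + ((a : ℝ) / q) * (r : ℝ) ^ 2) := by
  have hq' : (q : ℝ) ≠ 0 := Nat.cast_ne_zero.mpr hq.ne'
  have key : ((b : ℝ) / (2 * q)) * ((r + j * q : ℕ) : ℝ)
        + ((a : ℝ) / q) * ((r + j * q : ℕ) : ℝ) ^ 2
      = (((b : ℝ) / (2 * q)) * r + ((a : ℝ) / q) * (r : ℝ) ^ 2)
        + ((j : ℝ) * ((b : ℝ) / 2) + ((a * (2 * r * j + j ^ 2 * q) : ℤ) : ℝ)) := by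
    push_cast
    field_simp
    ring
  rw [key, ec_add, ec_add, ec_add, ec_int, ec_nat_mul, ec_half_odd hb]
  ring

lemma sum_factor (q : ℕ) (hq : 0 < q) (a b : ℤ) (hb : Odd b) (t : ℕ) :
    quadWeylSum ((b : ℝ) / (2 * q), (a : ℝ) / q) (t * q)
      = (∑ j ∈ Finset.range t, (-1 : ℂ) ^ j)
        * quadWeylSum ((b : ℝ) / (2 * q), (a : ℝ) / q) q := by
  set f : ℕ → ℂ := fun n => ec (((b : ℝ) / (2 * q)) * n + ((a : ℝ) / q) * (n : ℝ) ^ 2) with hf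
  have hQ : ∀ N, quadWeylSum ((b : ℝ) / (2 * q), (a : ℝ) / q) N = ∑ n ∈ Finset.Icc 1 N, f n :=
    fun N => quadWeylSum_eq _ N
  rw [hQ, hQ]
  induction t with
  | zero => simp
  | succ t ih =>
      have h1 : Finset.Icc 1 ((t + 1) * q) = Finset.Ioc 0 ((t + 1) * q) := rfl
      have h2 : Finset.Icc 1 (t * q) = Finset.Ioc 0 (t * q) := rfl
      rw [h1]
      have hsplit : (∑ n ∈ Finset.Ioc 0 (t * q), f n)
            + ∑ n ∈ Finset.Ioc (t * q) ((t + 1) * q), f n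
          = ∑ n ∈ Finset.Ioc 0 ((t + 1) * q), f n :=
        Finset.sum_Ioc_consecutive f (Nat.zero_le _)
          (by nlinarith [hq])
      rw [← hsplit, ← h2, ih]
      have hmap : Finset.Ioc (t * q) ((t + 1) * q)
          = Finset.map (addLeftEmbedding (t * q)) (Finset.Ioc 0 q) := by
        rw [Finset.map_add_left_Ioc]
        congr 1 <;> ring
      have hblock : ∑ n ∈ Finset.Ioc (t * q) ((t + 1) * q), f n
          = (-1 : ℂ) ^ t * ∑ r ∈ Finset.Icc 1 q, f r := by
        rw [hmap, Finset.sum_map, Finset.mul_sum]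
        refine Finset.sum_congr rfl fun r _ => ?_
        have : addLeftEmbedding (t * q) r = r + t * q := by
          simp [addLeftEmbedding, add_comm]
        rw [this, hf]
        exact term_shift q hq a b hb r t
      rw [hblock, Finset.sum_range_succ]
      ring
lemma sum_zero (q : ℕ) (hq : 0 < q) (a b : ℤ) (hb : Odd b) (k : ℕ) :
    quadWeylSum ((b : ℝ) / (2 * q), (a : ℝ) / q) (2 * k * q) = 0 := by
  rw [sum_factor q hq a b hb (2 * k), neg_one_geom_sum]
  simp [Nat.even_mul]

theorem zero_set_quad_weyl_contains_dense_Gdelta :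
    ∃ G : Set (ℝ × ℝ), IsGδ G ∧ Dense G ∧
      G ⊆ {x : ℝ × ℝ | atTop.liminf (fun N => ‖quadWeylSum x N‖) = 0} := by
  -- the Gδ set
  set G : Set (ℝ × ℝ) := ⋂ (k : ℕ), ⋂ (M : ℕ), ⋃ (N : ℕ), ⋃ (_ : N ≥ M),
      {x : ℝ × ℝ | ‖quadWeylSum x N‖ < 1 / (k + 1)} with hG
  have hcont : ∀ N : ℕ, Continuous fun x : ℝ × ℝ => ‖quadWeylSum x N‖ := by
    intro N
    refine continuous_norm.comp ?_
    unfold quadWeylSum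
    refine continuous_finset_sum _ fun n _ => Complex.continuous_exp.comp ?_
    fun_prop
  refine ⟨G, ?_, ?_, ?_⟩
  · -- Gδ
    refine IsGδ.iInter fun k => IsGδ.iInter fun M => IsOpen.isGδ ?_
    exact isOpen_iUnion fun N => isOpen_iUnion fun _ =>
      isOpen_lt (hcont N) continuous_const
  · -- Dense: the set D of special rational points is dense and contained in G
    have hD : ∀ x : ℝ × ℝ, ∀ r > (0 : ℝ), (Metric.ball x r ∩ G).Nonempty := by
      intro x r hr
      obtain ⟨q, hq⟩ := exists_nat_gt (3 / r)
      have hq0 : 0 < q := by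
        by_contra h
        push_neg at h
        interval_cases q
        simp at hq
        nlinarith [div_pos (by norm_num : (0:ℝ) < 3) hr]
      have hqR : (0 : ℝ) < q := Nat.cast_pos.mpr hq0
      have h3q : 3 / r < q := hq
      have hrq : 3 / q < r := by
        rw [div_lt_iff₀ hqR]
        rw [div_lt_iff₀ hr] at h3q
        linarith
      set a : ℤ := ⌊x.2 * q⌋ with ha
      set b : ℤ := 2 * ⌊x.1 * q⌋ + 1 with hb
      have hbodd : Odd b := ⟨⌊x.1 * q⌋, by ring⟩
      set y : ℝ × ℝ := ((b : ℝ) / (2 * q), (a : ℝ) / q) with hy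
      have hd1 : |y.1 - x.1| < 2 / q := by
        have h1 : (⌊x.1 * q⌋ : ℝ) ≤ x.1 * q := Int.floor_le _
        have h2 : x.1 * q < ⌊x.1 * q⌋ + 1 := Int.lt_floor_add_one _
        have heq : y.1 - x.1 = ((2 * (⌊x.1 * q⌋ : ℝ) + 1) - 2 * (x.1 * q)) / (2 * q) := by
          rw [hy]; push_cast [hb]; field_simp
        have hA : |(2 * (⌊x.1 * q⌋ : ℝ) + 1) - 2 * (x.1 * q)| ≤ 1 := by
          rw [abs_le]; constructor <;> nlinarith
        rw [heq, abs_div, abs_of_pos (by positivity : (0:ℝ) < 2 * q)]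
        calc |(2 * (⌊x.1 * q⌋ : ℝ) + 1) - 2 * (x.1 * q)| / (2 * q) ≤ 1 / (2 * q) := by
              gcongr
          _ < 2 / q := by rw [div_lt_div_iff₀ (by positivity) hqR]; nlinarith
      have hd2 : |y.2 - x.2| < 2 / q := by
        have h1 : (⌊x.2 * q⌋ : ℝ) ≤ x.2 * q := Int.floor_le _
        have h2 : x.2 * q < ⌊x.2 * q⌋ + 1 := Int.lt_floor_add_one _
        have heq : y.2 - x.2 = ((⌊x.2 * q⌋ : ℝ) - x.2 * q) / q := by
          rw [hy]; push_cast [ha]; field_simp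
        have hA : |(⌊x.2 * q⌋ : ℝ) - x.2 * q| ≤ 1 := by
          rw [abs_le]; constructor <;> nlinarith
        rw [heq, abs_div, abs_of_pos hqR]
        calc |(⌊x.2 * q⌋ : ℝ) - x.2 * q| / q ≤ 1 / q := by gcongr
          _ < 2 / q := by rw [div_lt_div_iff₀ hqR hqR]; nlinarith
      have h2r : (2 : ℝ) / q < r := by
        rw [div_lt_iff₀ hqR] at hrq ⊢
        linarith
      have hyball : y ∈ Metric.ball x r := by
        rw [Metric.mem_ball, Prod.dist_eq]
        refine max_lt ?_ ?_
        · rw [Real.dist_eq]; exact hd1.trans h2r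
        · rw [Real.dist_eq]; exact hd2.trans h2r
      have hyG : y ∈ G := by
        rw [hG]
        refine Set.mem_iInter.mpr fun k => Set.mem_iInter.mpr fun M => ?_
        refine Set.mem_iUnion.mpr ⟨2 * (M + 1) * q, Set.mem_iUnion.mpr ⟨?_, ?_⟩⟩
        · calc M ≤ M + 1 := Nat.le_succ M
            _ ≤ 2 * (M + 1) * q := by nlinarith [hq0]
        · show ‖quadWeylSum y (2 * (M + 1) * q)‖ < 1 / (k + 1)
          rw [hy, sum_zero q hq0 a b hbodd (M + 1)]
          simp
          positivity
      exact ⟨y, hyball, hyG⟩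
    exact Metric.dense_iff.mpr fun x r hr => hD x r hr
  · -- G ⊆ liminf-zero set
    intro x hx
    simp only [Set.mem_setOf_eq]
    have hfreq : ∀ ε > (0 : ℝ), ∃ᶠ N in atTop, ‖quadWeylSum x N‖ < ε := by
      intro ε hε
      obtain ⟨k, hk⟩ := exists_nat_one_div_lt hε
      rw [hG] at hx
      have hxk := Set.mem_iInter.mp hx k
      rw [Filter.frequently_atTop]
      intro M
      have hxM := Set.mem_iInter.mp hxk M
      obtain ⟨N, hN⟩ := Set.mem_iUnion.mp hxM
      obtain ⟨hNM, hNlt⟩ := Set.mem_iUnion.mp hN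
      exact ⟨N, hNM, lt_trans hNlt hk⟩
    have hbdd : IsBoundedUnder (· ≥ ·) atTop fun N => ‖quadWeylSum x N‖ :=
      isBoundedUnder_of ⟨0, fun N => norm_nonneg _⟩
    have hcob : IsCoboundedUnder (· ≥ ·) atTop fun N => ‖quadWeylSum x N‖ :=
      IsCoboundedUnder.of_frequently_le ((hfreq 1 one_pos).mono fun N h => h.le)
    refine le_antisymm ?_ ?_
    · refine le_of_forall_pos_le_add fun ε hε => ?_
      rw [zero_add]
      exact liminf_le_of_frequently_le ((hfreq ε hε).mono fun N h => h.le) hbdd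
    · exact le_liminf_of_le hcob (Eventually.of_forall fun N => norm_nonneg _)
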